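/- Let L be a simple line arrangement of n ≥ 3 lines and let v be any vertex of its arrangement graph G_L. Then the induced subgraph of G_L on V(L) \ {v} is not isomorphic to the arrangement graph of any simple line arrangement. -/

import Mathlib

/-- A line in the Euclidean plane `ℝ × ℝ`, given by an affine equation. -/
def IsLine (l : Set (ℝ × ℝ)) : Prop :=
  ∃ a b c : ℝ, (a, b) ≠ (0, 0) ∧ l = {p : ℝ × ℝ | a * p.1 + b * p.2 = c}

/-- A simple line arrangement of `n` lines in the Euclidean plane: `n` distinct lines,
every two of which meet in exactly one point, and no point lies on three of the lines. -/
structure SimpleLineArrangement (n : ℕ) where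
  lines : Finset (Set (ℝ × ℝ))
  card_lines : lines.card = n
  isLine : ∀ l ∈ lines, IsLine l
  meet : ∀ l₁ ∈ lines, ∀ l₂ ∈ lines, l₁ ≠ l₂ → ∃! p : ℝ × ℝ, p ∈ l₁ ∩ l₂
  simple : ∀ p : ℝ × ℝ, ∀ l₁ ∈ lines, ∀ l₂ ∈ lines, ∀ l₃ ∈ lines,
    p ∈ l₁ → p ∈ l₂ → p ∈ l₃ → l₁ = l₂ ∨ l₁ = l₃ ∨ l₂ = l₃

namespace SimpleLineArrangement

variable {n : ℕ}

/-- The vertex set of the arrangement: all intersection points of pairs of lines. -/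
def verts (A : SimpleLineArrangement n) : Set (ℝ × ℝ) :=
  {p | ∃ l₁ ∈ A.lines, ∃ l₂ ∈ A.lines, l₁ ≠ l₂ ∧ p ∈ l₁ ∧ p ∈ l₂}

/-- The arrangement graph: two distinct vertices are adjacent iff some line of the
arrangement contains both and no other vertex lies strictly between them on that line. -/
def graph (A : SimpleLineArrangement n) : SimpleGraph (ℝ × ℝ) where
  Adj u v := u ≠ v ∧ u ∈ A.verts ∧ v ∈ A.verts ∧
    ∃ l ∈ A.lines, u ∈ l ∧ v ∈ l ∧ ∀ w ∈ A.verts, w ∈ l → ¬ Sbtw ℝ u w v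
  symm := by
    constructor; rintro u v ⟨huv, hu, hv, l, hl, hul, hvl, hbet⟩
    exact ⟨huv.symm, hv, hu, l, hl, hvl, hul, fun w hw hwl hb => hbet w hw hwl hb.symm⟩
  loopless := by constructor; rintro u ⟨h, -⟩; exact h rfl

/-- The degree of a vertex in the arrangement graph. -/
noncomputable def deg (A : SimpleLineArrangement n) (v : ℝ × ℝ) : ℕ :=
  {w | A.graph.Adj v w}.ncard

/-- The number of vertices of the arrangement graph having degree `i`. -/
noncomputable def degCount (A : SimpleLineArrangement n) (i : ℕ) : ℕ :=
  {v | v ∈ A.verts ∧ A.deg v = i}.ncard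

/-- The eccentricity of a vertex: the maximum graph distance to a vertex. -/
noncomputable def ecc (A : SimpleLineArrangement n) (u : ℝ × ℝ) : ℕ :=
  sSup ((fun v => A.graph.dist u v) '' A.verts)

/-- The realization `R(L)`: the union of the closed segments joining adjacent vertices. -/
def realization (A : SimpleLineArrangement n) : Set (ℝ × ℝ) :=
  ⋃ (u : ℝ × ℝ) (v : ℝ × ℝ) (_ : A.graph.Adj u v), segment ℝ u v

/-- A point lies on the outer face of the realization if it belongs to the closure of
the unbounded connected component of the complement of the realization. -/
def OnOuterFace (A : SimpleLineArrangement n) (p : ℝ × ℝ) : Prop :=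
  ∃ q : ℝ × ℝ, q ∉ A.realization ∧
    ¬ Bornology.IsBounded (connectedComponentIn (A.realization)ᶜ q) ∧
    p ∈ closure (connectedComponentIn (A.realization)ᶜ q)

end SimpleLineArrangement

open scoped Classical in
lemma SimpleLineArrangement.verts_bijOn {n : ℕ} (A : SimpleLineArrangement n) :
    Set.BijOn (fun p => A.lines.filter (fun l => p ∈ l)) A.verts
      ((A.lines.powersetCard 2 : Finset (Finset (Set (ℝ × ℝ)))) : Set (Finset (Set (ℝ × ℝ)))) := by
  classical
  have key : ∀ p ∈ A.verts, ∀ l₁ ∈ A.lines, ∀ l₂ ∈ A.lines, l₁ ≠ l₂ → p ∈ l₁ → p ∈ l₂ →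
      A.lines.filter (fun l => p ∈ l) = {l₁, l₂} := by
    intro p _ l₁ h₁ l₂ h₂ hne hp₁ hp₂
    ext l
    simp only [Finset.mem_filter, Finset.mem_insert, Finset.mem_singleton]
    constructor
    · rintro ⟨hl, hpl⟩
      rcases A.simple p l hl l₁ h₁ l₂ h₂ hpl hp₁ hp₂ with h | h | h
      · exact Or.inl h
      · exact Or.inr h
      · exact absurd h hne
    · rintro (rfl | rfl)
      · exact ⟨h₁, hp₁⟩
      · exact ⟨h₂, hp₂⟩
  have maps : ∀ p ∈ A.verts, A.lines.filter (fun l => p ∈ l) ∈ A.lines.powersetCard 2 := by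
    rintro p hp
    obtain ⟨l₁, h₁, l₂, h₂, hne, hp₁, hp₂⟩ := hp
    rw [Finset.mem_powersetCard]
    refine ⟨Finset.filter_subset _ _, ?_⟩
    rw [key p ⟨l₁, h₁, l₂, h₂, hne, hp₁, hp₂⟩ l₁ h₁ l₂ h₂ hne hp₁ hp₂]
    rw [Finset.card_insert_of_notMem (by simpa using hne), Finset.card_singleton]
  refine ⟨fun p hp => maps p hp, ?_, ?_⟩
  · intro p hp q hq heq
    obtain ⟨l₁, h₁, l₂, h₂, hne, hp₁, hp₂⟩ := hp
    have hq' : A.lines.filter (fun l => q ∈ l) = {l₁, l₂} := by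
      simp only at heq
      rw [← heq]; exact key p ⟨l₁, h₁, l₂, h₂, hne, hp₁, hp₂⟩ l₁ h₁ l₂ h₂ hne hp₁ hp₂
    have hq₁ : q ∈ l₁ := by
      have : l₁ ∈ A.lines.filter (fun l => q ∈ l) := by
        rw [hq']; simp
      exact (Finset.mem_filter.mp this).2
    have hq₂ : q ∈ l₂ := by
      have : l₂ ∈ A.lines.filter (fun l => q ∈ l) := by
        rw [hq']; simp
      exact (Finset.mem_filter.mp this).2
    obtain ⟨x, -, hu⟩ := A.meet l₁ h₁ l₂ h₂ hne
    rw [hu p ⟨hp₁, hp₂⟩, hu q ⟨hq₁, hq₂⟩]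
  · intro s hs
    rw [Finset.mem_coe, Finset.mem_powersetCard] at hs
    obtain ⟨hsub, hcard⟩ := hs
    obtain ⟨l₁, l₂, hne, rfl⟩ := Finset.card_eq_two.mp hcard
    have h₁ : l₁ ∈ A.lines := hsub (by simp)
    have h₂ : l₂ ∈ A.lines := hsub (by simp)
    obtain ⟨p, ⟨hp₁, hp₂⟩, -⟩ := A.meet l₁ h₁ l₂ h₂ hne
    have hpv : p ∈ A.verts := ⟨l₁, h₁, l₂, h₂, hne, hp₁, hp₂⟩
    exact ⟨p, hpv, key p hpv l₁ h₁ l₂ h₂ hne hp₁ hp₂⟩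

lemma SimpleLineArrangement.verts_finite {n : ℕ} (A : SimpleLineArrangement n) :
    A.verts.Finite := by
  classical
  have h := A.verts_bijOn
  exact Set.Finite.of_finite_image (h.image_eq ▸ (A.lines.powersetCard 2).finite_toSet) h.injOn

lemma SimpleLineArrangement.verts_ncard {n : ℕ} (A : SimpleLineArrangement n) :
    A.verts.ncard = n.choose 2 := by
  classical
  have h := A.verts_bijOn
  have := Set.ncard_image_of_injOn h.injOn
  rw [h.image_eq] at this
  rw [← this, Set.ncard_coe_finset, Finset.card_powersetCard, A.card_lines]

theorem vertex_deleted_not_arrangement_graph (n : ℕ) (hn : 3 ≤ n)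
    (A : SimpleLineArrangement n) (v : ℝ × ℝ) (hv : v ∈ A.verts) :
    ¬ ∃ (m : ℕ) (_ : 3 ≤ m) (B : SimpleLineArrangement m),
        Nonempty ((A.graph.induce (A.verts \ {v})) ≃g (B.graph.induce B.verts)) := by
  rintro ⟨m, hm, B, ⟨e⟩⟩
  have hcard : (A.verts \ {v}).ncard = B.verts.ncard := by
    rw [← Nat.card_coe_set_eq, ← Nat.card_coe_set_eq]
    exact Nat.card_congr e.toEquiv
  have hA : (A.verts \ {v}).ncard + 1 = A.verts.ncard :=
    Set.ncard_diff_singleton_add_one hv A.verts_finite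
  rw [hcard, B.verts_ncard, A.verts_ncard] at hA
  -- now m.choose 2 + 1 = n.choose 2, with 3 ≤ m, 3 ≤ n : contradiction
  rcases le_or_gt n m with h | h
  · have : n.choose 2 ≤ m.choose 2 := Nat.choose_le_choose 2 h
    omega
  · have h1 : m + 1 ≤ n := h
    have h2 : (m + 1).choose 2 ≤ n.choose 2 := Nat.choose_le_choose 2 h1
    have h3 : (m + 1).choose 2 = m.choose 1 + m.choose 2 := Nat.choose_succ_succ m 1
    have h4 : m.choose 1 = m := Nat.choose_one_right m
    omega
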